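/- Let n be a natural number and v : Fin n → Fin n → ℝ a valuation matrix. If the identity permutation is a maximum matching (∑ i, v i i ≥ ∑ i, v i (τ i) for every permutation τ), then there exists a price vector p : Fin n → ℝ satisfying the difference constraints v i i - p i ≥ v i j - p j for all i, j; in particular, the identity permutation is induced by p and p is market-clearing. -/

import Mathlib

namespace Stmt14
open List Finset

variable {n : ℕ}

noncomputable def wt (v : Fin n → Fin n → ℝ) (i j : Fin n) : ℝ := v i j - v i i

@[simp] lemma wt_self (v : Fin n → Fin n → ℝ) (i : Fin n) : wt v i i = 0 := by simp [wt]

noncomputable def pathWt (v : Fin n → Fin n → ℝ) : List (Fin n) → ℝ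
  | [] => 0
  | [_] => 0
  | a :: b :: l => wt v a b + pathWt v (b :: l)

@[simp] lemma pathWt_nil (v : Fin n → Fin n → ℝ) : pathWt v [] = 0 := rfl
@[simp] lemma pathWt_single (v : Fin n → Fin n → ℝ) (a : Fin n) : pathWt v [a] = 0 := rfl
lemma pathWt_cons_cons (v : Fin n → Fin n → ℝ) (a b : Fin n) (l : List (Fin n)) :
    pathWt v (a :: b :: l) = wt v a b + pathWt v (b :: l) := rfl

lemma pathWt_append (v : Fin n → Fin n → ℝ) :
    ∀ (X : List (Fin n)) (y : Fin n) (Z : List (Fin n)),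
      pathWt v (X ++ y :: Z) = pathWt v (X ++ [y]) + pathWt v (y :: Z)
  | [], y, Z => by simp
  | [a], y, Z => by simp [pathWt_cons_cons]
  | a :: b :: X, y, Z => by
    have := pathWt_append v (b :: X) y Z
    simp only [List.cons_append, pathWt_cons_cons] at *
    rw [this]; ring

lemma pathWt_concat (v : Fin n → Fin n → ℝ) :
    ∀ (l : List (Fin n)) (hl : l ≠ []) (j : Fin n),
      pathWt v (l ++ [j]) = pathWt v l + wt v (l.getLast hl) j
  | [], hl, j => absurd rfl hl
  | [a], _, j => by simp [pathWt_cons_cons]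
  | a :: b :: X, _, j => by
    have h := pathWt_concat v (b :: X) (by simp) j
    have hg : (a :: b :: X).getLast (by simp) = (b :: X).getLast (by simp) :=
      List.getLast_cons (by simp)
    simp only [List.cons_append, pathWt_cons_cons]
    rw [show b :: (X ++ [j]) = (b :: X) ++ [j] from rfl, h, hg]
    ring

lemma sum_formPerm (v : Fin n → Fin n → ℝ) :
    ∀ (l : List (Fin n)) (a : Fin n), (a :: l).Nodup →
      ∑ x ∈ (a :: l).toFinset, wt v x ((a :: l).formPerm x)
        = pathWt v (a :: l) + wt v ((a :: l).getLast (List.cons_ne_nil a l)) a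
  | [], a, _ => by simp [List.formPerm_singleton]
  | b :: l', a, h => by
    obtain ⟨ha, hL⟩ := List.nodup_cons.mp h
    have hLne : (b :: l') ≠ [] := List.cons_ne_nil b l'
    have hσlast : (b :: l').formPerm ((b :: l').getLast hLne) = b :=
      List.formPerm_apply_getLast b l'
    have key : ∀ x ∈ (b :: l'),
        (a :: b :: l').formPerm x
          = if x = (b :: l').getLast hLne then a else (b :: l').formPerm x := by
      intro x hx
      have hy : (b :: l').formPerm x ∈ (b :: l') :=
        List.formPerm_apply_mem_of_mem hx
      have hya : (b :: l').formPerm x ≠ a := fun e => ha (e ▸ hy)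
      rw [List.formPerm_cons_cons, Equiv.Perm.mul_apply]
      by_cases hxt : x = (b :: l').getLast hLne
      · subst hxt
        rw [hσlast, if_pos rfl, Equiv.swap_apply_right]
      · have hyb : (b :: l').formPerm x ≠ b := fun e =>
          hxt ((b :: l').formPerm.injective (e.trans hσlast.symm))
        rw [if_neg hxt, Equiv.swap_apply_of_ne_of_ne hya hyb]
    have hlm : (b :: l').getLast hLne ∈ (b :: l').toFinset :=
      List.mem_toFinset.mpr (List.getLast_mem hLne)
    have IH := sum_formPerm v l' b hL
    have hsplit : ∑ x ∈ (b :: l').toFinset, wt v x ((a :: b :: l').formPerm x)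
        = wt v ((b :: l').getLast hLne) a
          + ∑ x ∈ (b :: l').toFinset.erase ((b :: l').getLast hLne),
              wt v x ((b :: l').formPerm x) := by
      rw [← Finset.add_sum_erase _ _ hlm, key _ (List.getLast_mem hLne), if_pos rfl]
      congr 1
      refine Finset.sum_congr rfl fun x hx => ?_
      rw [key x (List.mem_toFinset.mp (Finset.mem_of_mem_erase hx)),
        if_neg (Finset.ne_of_mem_erase hx)]
    have hIH : ∑ x ∈ (b :: l').toFinset.erase ((b :: l').getLast hLne),
        wt v x ((b :: l').formPerm x) = pathWt v (b :: l') := by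
      have h2 := Finset.add_sum_erase (b :: l').toFinset
        (fun x => wt v x ((b :: l').formPerm x)) hlm
      simp only [hσlast] at h2
      rw [IH] at h2
      linarith
    have hgl : (a :: b :: l').getLast (List.cons_ne_nil a (b :: l'))
        = (b :: l').getLast hLne := List.getLast_cons hLne
    rw [List.toFinset_cons, Finset.sum_insert (by simpa using ha), hsplit, hIH, hgl,
      List.formPerm_apply_head a b l' h, pathWt_cons_cons]
    ring

lemma cycle_nonpos {v : Fin n → Fin n → ℝ}
    (hid : ∀ τ : Equiv.Perm (Fin n), ∑ i, v i i ≥ ∑ i, v i (τ i))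
    (a : Fin n) (l : List (Fin n)) (h : (a :: l).Nodup) :
    pathWt v (a :: l) + wt v ((a :: l).getLast (List.cons_ne_nil a l)) a ≤ 0 := by
  have h1 : ∑ i, wt v i ((a :: l).formPerm i) ≤ 0 := by
    have := hid ((a :: l).formPerm)
    have e : ∑ i, wt v i ((a :: l).formPerm i)
        = (∑ i, v i ((a :: l).formPerm i)) - ∑ i, v i i := by
      rw [← Finset.sum_sub_distrib]; rfl
    rw [e]; linarith
  have h2 : ∑ i, wt v i ((a :: l).formPerm i)
      = ∑ x ∈ (a :: l).toFinset, wt v x ((a :: l).formPerm x) := by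
    refine (Finset.sum_subset (Finset.subset_univ _) fun x _ hx => ?_).symm
    rw [List.formPerm_apply_of_notMem (by simpa using hx), wt_self]
  rw [← sum_formPerm v l a h, ← h2]
  exact h1

noncomputable def paths (j : Fin n) : Finset (List (Fin n)) :=
  (((List.finRange n).sublists.flatMap List.permutations).toFinset).filter
    (fun l => l.Nodup ∧ l.getLast? = some j)

lemma mem_paths {j : Fin n} {l : List (Fin n)} :
    l ∈ paths j ↔ l.Nodup ∧ l.getLast? = some j := by
  constructor
  · intro hl
    exact (Finset.mem_filter.mp hl).2
  · intro ⟨h1, h2⟩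
    refine Finset.mem_filter.mpr ⟨?_, h1, h2⟩
    rw [List.mem_toFinset, List.mem_flatMap]
    obtain ⟨l', hp, hs⟩ := h1.subperm (fun x _ => List.mem_finRange x)
    exact ⟨l', List.mem_sublists.mpr hs, List.mem_permutations.mpr hp.symm⟩

lemma paths_nonempty (j : Fin n) : (paths j).Nonempty :=
  ⟨[j], mem_paths.mpr ⟨List.nodup_singleton j, rfl⟩⟩

noncomputable def price (v : Fin n → Fin n → ℝ) (j : Fin n) : ℝ :=
  (paths j).sup' (paths_nonempty j) (pathWt v)

lemma price_key {v : Fin n → Fin n → ℝ}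
    (hid : ∀ τ : Equiv.Perm (Fin n), ∑ i, v i i ≥ ∑ i, v i (τ i)) (i j : Fin n) :
    price v j ≥ price v i + wt v i j := by
  obtain ⟨l, hl, hmax⟩ := Finset.exists_mem_eq_sup' (paths_nonempty i) (pathWt v)
  obtain ⟨hnd, hlast⟩ := mem_paths.mp hl
  have hne : l ≠ [] := by rintro rfl; simp at hlast
  have hi : l.getLast hne = i := by
    rw [List.getLast?_eq_getLast hne] at hlast
    exact Option.some_injective _ hlast
  by_cases hj : j ∈ l
  · obtain ⟨A, B, rfl⟩ := List.append_of_mem hj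
    have hAj : (A ++ [j]).Nodup :=
      hnd.sublist ((List.cons_sublist_cons.mpr (List.nil_sublist B)).append_left A)
    have hjB : (j :: B).Nodup := hnd.sublist (List.sublist_append_right A (j :: B))
    have hmem : A ++ [j] ∈ paths j :=
      mem_paths.mpr ⟨hAj, by simp [List.getLast?_concat]⟩
    have hle : pathWt v (A ++ [j]) ≤ price v j :=
      Finset.le_sup' (pathWt v) hmem
    have hsplit : pathWt v (A ++ j :: B) = pathWt v (A ++ [j]) + pathWt v (j :: B) :=
      pathWt_append v A j B
    have hlastB : (A ++ j :: B).getLast hne = (j :: B).getLast (List.cons_ne_nil j B) :=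
      List.getLast_append_of_ne_nil hne (List.cons_ne_nil j B)
    have hcyc := cycle_nonpos hid j B hjB
    have hi2 : (j :: B).getLast (List.cons_ne_nil j B) = i := hlastB.symm.trans hi
    rw [hi2] at hcyc
    have hpi : price v i = pathWt v (A ++ [j]) + pathWt v (j :: B) := hmax.trans hsplit
    linarith
  · have hmem : l ++ [j] ∈ paths j := by
      refine mem_paths.mpr ⟨?_, by simp [List.getLast?_concat]⟩
      rw [List.nodup_append]
      exact ⟨hnd, List.nodup_singleton j, fun a ha b hb e => hj ((List.mem_singleton.mp hb) ▸ e ▸ ha)⟩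
    have hle : pathWt v (l ++ [j]) ≤ price v j := Finset.le_sup' (pathWt v) hmem
    rw [pathWt_concat v l hne j, hi] at hle
    have hpi : price v i = pathWt v l := hmax
    linarith

end Stmt14


/-- `σ` is induced by `p`: every buyer `i` prefers product `σ i` at prices `p`. -/
def Induced (n : ℕ) (v : Fin n → Fin n → ℝ) (p : Fin n → ℝ)
    (σ : Equiv.Perm (Fin n)) : Prop :=
  ∀ i k, v i (σ i) - p (σ i) ≥ v i k - p k

/-- `p` is market-clearing: some permutation is induced by `p`. -/
def MarketClearing (n : ℕ) (v : Fin n → Fin n → ℝ) (p : Fin n → ℝ) : Prop :=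
  ∃ σ : Equiv.Perm (Fin n), Induced n v p σ

/-- If the identity permutation is a maximum matching, then the system of
difference constraints is solvable; in particular, the resulting prices
induce the identity and are market-clearing. -/
theorem stmt_14 (n : ℕ) (v : Fin n → Fin n → ℝ)
    (hid : ∀ τ : Equiv.Perm (Fin n), ∑ i, v i i ≥ ∑ i, v i (τ i)) :
    ∃ p : Fin n → ℝ, (∀ i j, v i i - p i ≥ v i j - p j) ∧
      Induced n v p (Equiv.refl (Fin n)) ∧ MarketClearing n v p := by
  have h : ∀ i j, v i i - Stmt14.price v i ≥ v i j - Stmt14.price v j := by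
    intro i j
    have := Stmt14.price_key hid i j
    simp only [Stmt14.wt] at this
    linarith
  exact ⟨Stmt14.price v, h, fun i k => h i k, ⟨Equiv.refl _, fun i k => h i k⟩⟩
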